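/- For every finite strategic game H, MGW^ω = MLW^ω: the outcome of iterating the global elimination of strategies weakly dominated by a mixed strategy equals the outcome of iterating the local elimination of strategies weakly dominated by a mixed strategy, both started from H. -/

import Mathlib

open Function

/-- The opponents' part of the joint strategy `t` lies in the restriction `G`. -/
def OppIn {ι : Type*} [DecidableEq ι] {σ : ι → Type*} (G : ∀ i, Set (σ i)) (i : ι) (t : ∀ j, σ j) : Prop :=
  ∀ j, j ≠ i → t j ∈ G j

/-- `s'` strictly dominates `s` on the restriction `G` (pure strategies). -/
def SDom {ι : Type*} [DecidableEq ι] {σ : ι → Type*} (p : ι → (∀ j, σ j) → ℝ) (G : ∀ i, Set (σ i))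
    (i : ι) (s' s : σ i) : Prop :=
  ∀ t : ∀ j, σ j, OppIn G i t → p i (update t i s) < p i (update t i s')

/-- `s'` weakly dominates `s` on the restriction `G` (pure strategies). -/
def WDom {ι : Type*} [DecidableEq ι] {σ : ι → Type*} (p : ι → (∀ j, σ j) → ℝ) (G : ∀ i, Set (σ i))
    (i : ι) (s' s : σ i) : Prop :=
  (∀ t : ∀ j, σ j, OppIn G i t → p i (update t i s) ≤ p i (update t i s')) ∧
  (∃ t : ∀ j, σ j, OppIn G i t ∧ p i (update t i s) < p i (update t i s'))

/-- Probability distributions over a finite type with support contained in `A`. -/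
def Mixed {α : Type*} [Fintype α] (A : Set α) : Set (α → ℝ) :=
  {m | (∀ a, 0 ≤ m a) ∧ ∑ a, m a = 1 ∧ ∀ a, m a ≠ 0 → a ∈ A}

/-- Expected payoff of player `i` using mixed strategy `m` against `t₋ᵢ`. -/
def epay {ι : Type*} [DecidableEq ι] {σ : ι → Type*} [∀ i, Fintype (σ i)]
    (p : ι → (∀ j, σ j) → ℝ) (i : ι) (m : σ i → ℝ) (t : ∀ j, σ j) : ℝ :=
  ∑ a, m a * p i (update t i a)

/-- The mixed strategy `m` strictly dominates `s` on `G`. -/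
def MSDom {ι : Type*} [DecidableEq ι] {σ : ι → Type*} [∀ i, Fintype (σ i)]
    (p : ι → (∀ j, σ j) → ℝ) (G : ∀ i, Set (σ i)) (i : ι) (m : σ i → ℝ) (s : σ i) : Prop :=
  ∀ t : ∀ j, σ j, OppIn G i t → p i (update t i s) < epay p i m t

/-- The mixed strategy `m` weakly dominates `s` on `G`. -/
def MWDom {ι : Type*} [DecidableEq ι] {σ : ι → Type*} [∀ i, Fintype (σ i)]
    (p : ι → (∀ j, σ j) → ℝ) (G : ∀ i, Set (σ i)) (i : ι) (m : σ i → ℝ) (s : σ i) : Prop :=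
  (∀ t : ∀ j, σ j, OppIn G i t → p i (update t i s) ≤ epay p i m t) ∧
  (∃ t : ∀ j, σ j, OppIn G i t ∧ p i (update t i s) < epay p i m t)

/-- Local elimination of strategies strictly dominated by a pure strategy. -/
def LS {ι : Type*} [DecidableEq ι] {σ : ι → Type*} (p : ι → (∀ j, σ j) → ℝ)
    (G : ∀ i, Set (σ i)) : ∀ i, Set (σ i) :=
  fun i => {s | s ∈ G i ∧ ¬ ∃ s' ∈ G i, SDom p G i s' s}

/-- Global elimination of strategies strictly dominated by a pure strategy. -/
def GS {ι : Type*} [DecidableEq ι] {σ : ι → Type*} (p : ι → (∀ j, σ j) → ℝ)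
    (G : ∀ i, Set (σ i)) : ∀ i, Set (σ i) :=
  fun i => {s | s ∈ G i ∧ ¬ ∃ s' : σ i, SDom p G i s' s}

/-- Local elimination of strategies weakly dominated by a pure strategy. -/
def LW {ι : Type*} [DecidableEq ι] {σ : ι → Type*} (p : ι → (∀ j, σ j) → ℝ)
    (G : ∀ i, Set (σ i)) : ∀ i, Set (σ i) :=
  fun i => {s | s ∈ G i ∧ ¬ ∃ s' ∈ G i, WDom p G i s' s}

/-- Global elimination of strategies weakly dominated by a pure strategy. -/
def GW {ι : Type*} [DecidableEq ι] {σ : ι → Type*} (p : ι → (∀ j, σ j) → ℝ)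
    (G : ∀ i, Set (σ i)) : ∀ i, Set (σ i) :=
  fun i => {s | s ∈ G i ∧ ¬ ∃ s' : σ i, WDom p G i s' s}

/-- Local elimination of strategies strictly dominated by a mixed strategy. -/
def MLS {ι : Type*} [DecidableEq ι] {σ : ι → Type*} [∀ i, Fintype (σ i)] (p : ι → (∀ j, σ j) → ℝ)
    (G : ∀ i, Set (σ i)) : ∀ i, Set (σ i) :=
  fun i => {s | s ∈ G i ∧ ¬ ∃ m ∈ Mixed (G i), MSDom p G i m s}

/-- Global elimination of strategies strictly dominated by a mixed strategy. -/
def MGS {ι : Type*} [DecidableEq ι] {σ : ι → Type*} [∀ i, Fintype (σ i)] (p : ι → (∀ j, σ j) → ℝ)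
    (G : ∀ i, Set (σ i)) : ∀ i, Set (σ i) :=
  fun i => {s | s ∈ G i ∧ ¬ ∃ m ∈ Mixed (Set.univ : Set (σ i)), MSDom p G i m s}

/-- Local elimination of strategies weakly dominated by a mixed strategy. -/
def MLW {ι : Type*} [DecidableEq ι] {σ : ι → Type*} [∀ i, Fintype (σ i)] (p : ι → (∀ j, σ j) → ℝ)
    (G : ∀ i, Set (σ i)) : ∀ i, Set (σ i) :=
  fun i => {s | s ∈ G i ∧ ¬ ∃ m ∈ Mixed (G i), MWDom p G i m s}

/-- Global elimination of strategies weakly dominated by a mixed strategy. -/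
def MGW {ι : Type*} [DecidableEq ι] {σ : ι → Type*} [∀ i, Fintype (σ i)] (p : ι → (∀ j, σ j) → ℝ)
    (G : ∀ i, Set (σ i)) : ∀ i, Set (σ i) :=
  fun i => {s | s ∈ G i ∧ ¬ ∃ m ∈ Mixed (Set.univ : Set (σ i)), MWDom p G i m s}

section AuxLemmas

variable {ι : Type*} [DecidableEq ι] {σ : ι → Type*} [∀ i, Fintype (σ i)]

private lemma sum_ite_zero' {α : Type*} [Fintype α] [DecidableEq α] (b : α) (g : α → ℝ) :
    ∑ c, (if c = b then (0:ℝ) else g c) = (∑ c, g c) - g b := by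
  have h : ∀ c, (if c = b then (0:ℝ) else g c) = g c - (if c = b then g b else 0) := by
    intro c; by_cases h : c = b <;> simp [h]
  rw [Finset.sum_congr rfl fun c _ => h c, Finset.sum_sub_distrib, Finset.sum_ite_eq']
  simp

private lemma epay_continuous (p : ι → (∀ j, σ j) → ℝ) (i : ι) (t : ∀ j, σ j) :
    Continuous fun m : σ i → ℝ => epay p i m t := by
  unfold epay
  exact continuous_finset_sum _ fun a _ => (continuous_apply a).mul continuous_const

/-- Combining lemma: if every strategy in the support of `m` is weakly matched (w.r.t. `G`)
by a mixed strategy over `B`, then `m` is matched by a mixed strategy over `B`. -/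
private lemma combine (p : ι → (∀ j, σ j) → ℝ) (G : ∀ i, Set (σ i)) (i : ι) (B : Set (σ i))
    (m : σ i → ℝ) (hm0 : ∀ a, 0 ≤ m a) (hm1 : ∑ a, m a = 1)
    (h : ∀ a, m a ≠ 0 → ∃ ma ∈ Mixed B, ∀ t, OppIn G i t →
      p i (update t i a) ≤ epay p i ma t) :
    ∃ m' ∈ Mixed B, ∀ t, OppIn G i t → epay p i m t ≤ epay p i m' t := by
  classical
  have h' : ∀ a, ∃ ma : σ i → ℝ, m a ≠ 0 → ma ∈ Mixed B ∧ ∀ t, OppIn G i t →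
      p i (update t i a) ≤ epay p i ma t := by
    intro a
    by_cases hma : m a = 0
    · exact ⟨0, fun h0 => absurd hma h0⟩
    · obtain ⟨ma, h1, h2⟩ := h a hma
      exact ⟨ma, fun _ => ⟨h1, h2⟩⟩
  choose f hf using h'
  refine ⟨fun b => ∑ a, m a * f a b, ⟨?_, ?_, ?_⟩, ?_⟩
  · intro b
    refine Finset.sum_nonneg fun a _ => ?_
    by_cases hma : m a = 0
    · simp [hma]
    · exact mul_nonneg (hm0 a) ((hf a hma).1.1 b)
  · rw [Finset.sum_comm, ← hm1]
    refine Finset.sum_congr rfl fun a _ => ?_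
    by_cases hma : m a = 0
    · simp [hma]
    · rw [← Finset.mul_sum, (hf a hma).1.2.1, mul_one]
  · intro b hb
    by_contra hbB
    apply hb
    refine Finset.sum_eq_zero fun a _ => ?_
    by_cases hma : m a = 0
    · simp [hma]
    · have : f a b = 0 := by
        by_contra hfa
        exact hbB ((hf a hma).1.2.2 b hfa)
      simp [this]
  · intro t ht
    have hswap : epay p i (fun b => ∑ a, m a * f a b) t
        = ∑ a, m a * epay p i (f a) t := by
      simp only [epay, Finset.sum_mul]
      rw [Finset.sum_comm]
      refine Finset.sum_congr rfl fun a _ => ?_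
      rw [Finset.mul_sum]
      exact Finset.sum_congr rfl fun b _ => by ring
    rw [hswap]
    unfold epay
    refine Finset.sum_le_sum fun a _ => ?_
    by_cases hma : m a = 0
    · simp [hma]
    · exact mul_le_mul_of_nonneg_left ((hf a hma).2 t ht) (hm0 a)

/-- One-step lemma: every strategy of `G i` is weakly matched on `G` by a mixed strategy
supported in the survivors `MLW p G i`. Proved by maximizing total expected payoff over a
compact set of constrained mixed strategies. -/
private lemma stepA (p : ι → (∀ j, σ j) → ℝ) [Fintype ι] (G : ∀ i, Set (σ i)) (i : ι)
    (a : σ i) (ha : a ∈ G i) :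
    ∃ m ∈ Mixed (MLW p G i), ∀ t, OppIn G i t → p i (update t i a) ≤ epay p i m t := by
  classical
  set S : Set (σ i → ℝ) := {m | (∀ b, 0 ≤ m b) ∧ (∑ b, m b = 1) ∧ (∀ b, m b ≠ 0 → b ∈ G i) ∧
      ∀ t, OppIn G i t → p i (update t i a) ≤ epay p i m t} with hSdef
  have hdeltaepay : ∀ t, epay p i (fun b => if b = a then (1:ℝ) else 0) t
      = p i (update t i a) := by
    intro t
    simp [epay, ite_mul]
  have hdelta : (fun b => if b = a then (1:ℝ) else 0) ∈ S := by
    refine ⟨fun b => by by_cases h : b = a <;> simp [h], by simp, fun b hb => ?_, fun t _ => ?_⟩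
    · by_cases h : b = a
      · exact h ▸ ha
      · simp [h] at hb
    · rw [hdeltaepay]
  have hclosed : IsClosed S := by
    have hrw : S = (⋂ b, {m : σ i → ℝ | 0 ≤ m b}) ∩ ({m : σ i → ℝ | ∑ b, m b = 1} ∩
        ((⋂ b, {m : σ i → ℝ | m b ≠ 0 → b ∈ G i}) ∩
         (⋂ t, {m : σ i → ℝ | OppIn G i t → p i (update t i a) ≤ epay p i m t}))) := by
      ext m
      simp only [hSdef, Set.mem_inter_iff, Set.mem_iInter, Set.mem_setOf_eq]
    rw [hrw]
    refine IsClosed.inter ?_ (IsClosed.inter ?_ (IsClosed.inter ?_ ?_))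
    · exact isClosed_iInter fun b => isClosed_le continuous_const (continuous_apply b)
    · exact isClosed_eq (continuous_finset_sum _ fun b _ => continuous_apply b) continuous_const
    · refine isClosed_iInter fun b => ?_
      by_cases hbG : b ∈ G i
      · have : {m : σ i → ℝ | m b ≠ 0 → b ∈ G i} = Set.univ := by
          ext m; simp [hbG]
        rw [this]; exact isClosed_univ
      · have : {m : σ i → ℝ | m b ≠ 0 → b ∈ G i} = {m : σ i → ℝ | m b = 0} := by
          ext m; simp only [Set.mem_setOf_eq]
          constructor
          · intro h; by_contra h0; exact hbG (h h0)
          · intro h h0; exact absurd h h0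
        rw [this]; exact isClosed_eq (continuous_apply b) continuous_const
    · refine isClosed_iInter fun t => ?_
      by_cases hop : OppIn G i t
      · have : {m : σ i → ℝ | OppIn G i t → p i (update t i a) ≤ epay p i m t}
            = {m : σ i → ℝ | p i (update t i a) ≤ epay p i m t} := by
          ext m; simp [hop]
        rw [this]; exact isClosed_le continuous_const (epay_continuous p i t)
      · have : {m : σ i → ℝ | OppIn G i t → p i (update t i a) ≤ epay p i m t}
            = Set.univ := by
          ext m; simp [hop]
        rw [this]; exact isClosed_univ
  have hsub : S ⊆ stdSimplex ℝ (σ i) := fun m hm => ⟨hm.1, hm.2.1⟩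
  have hcomp : IsCompact S := (isCompact_stdSimplex ℝ (σ i)).of_isClosed_subset hclosed hsub
  set F : (σ i → ℝ) → ℝ := fun m => ∑ t : ∀ j, σ j, if OppIn G i t then epay p i m t else 0
    with hFdef
  have hFcont : Continuous F := by
    refine continuous_finset_sum _ fun t _ => ?_
    by_cases h : OppIn G i t
    · simpa [h] using epay_continuous p i t
    · simpa [h] using (continuous_const : Continuous fun _ : σ i → ℝ => (0:ℝ))
  obtain ⟨m, hmS, hmax⟩ := hcomp.exists_isMaxOn ⟨_, hdelta⟩ hFcont.continuousOn
  refine ⟨m, ⟨hmS.1, hmS.2.1, ?_⟩, hmS.2.2.2⟩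
  intro b hb
  by_contra hbnot
  have hbG : b ∈ G i := hmS.2.2.1 b hb
  have hEx : ∃ m₁ ∈ Mixed (G i), MWDom p G i m₁ b := by
    by_contra h
    exact hbnot ⟨hbG, h⟩
  obtain ⟨m₁, ⟨hm₁0, hm₁1, hm₁supp⟩, hdomle, t₀, ht₀op, ht₀lt⟩ := hEx
  have hbpos : 0 < m b := lt_of_le_of_ne (hmS.1 b) (Ne.symm hb)
  set m' : σ i → ℝ := fun c => (if c = b then 0 else m c) + m b * m₁ c with hm'def
  have hepay : ∀ t, epay p i m' t
      = epay p i m t + m b * (epay p i m₁ t - p i (update t i b)) := by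
    intro t
    have h1 : ∑ c, (if c = b then (0:ℝ) else m c) * p i (update t i c)
        = (∑ c, m c * p i (update t i c)) - m b * p i (update t i b) := by
      rw [← sum_ite_zero' b (fun c => m c * p i (update t i c))]
      exact Finset.sum_congr rfl fun c _ => by by_cases h : c = b <;> simp [h]
    simp only [epay, hm'def, add_mul, Finset.sum_add_distrib, h1, mul_assoc, ← Finset.mul_sum]
    ring
  have hm'S : m' ∈ S := by
    refine ⟨?_, ?_, ?_, ?_⟩
    · intro c
      have h1 : (0:ℝ) ≤ if c = b then 0 else m c := by
        by_cases h : c = b <;> simp [h, hmS.1 c]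
      exact add_nonneg h1 (mul_nonneg (hmS.1 b) (hm₁0 c))
    · rw [show (∑ c, m' c) = (∑ c, (if c = b then (0:ℝ) else m c)) + ∑ c, m b * m₁ c from
        by rw [← Finset.sum_add_distrib]]
      rw [sum_ite_zero' b m, hmS.2.1, ← Finset.mul_sum, hm₁1]
      ring
    · intro c hc
      by_contra hcG
      apply hc
      have h1 : (if c = b then (0:ℝ) else m c) = 0 := by
        by_cases h : c = b
        · simp [h]
        · simp only [if_neg h]
          by_contra hmc
          exact hcG (hmS.2.2.1 c hmc)
      have h2 : m₁ c = 0 := by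
        by_contra h
        exact hcG (hm₁supp c h)
      simp [hm'def, h1, h2]
    · intro t ht
      rw [hepay t]
      have h1 := hmS.2.2.2 t ht
      have h2 : 0 ≤ m b * (epay p i m₁ t - p i (update t i b)) :=
        mul_nonneg (hmS.1 b) (sub_nonneg.mpr (hdomle t ht))
      linarith
  have hlt : F m < F m' := by
    refine Finset.sum_lt_sum (fun t _ => ?_) ⟨t₀, Finset.mem_univ t₀, ?_⟩
    · by_cases h : OppIn G i t
      · simp only [if_pos h]
        rw [hepay t]
        have h2 : 0 ≤ m b * (epay p i m₁ t - p i (update t i b)) :=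
          mul_nonneg (hmS.1 b) (sub_nonneg.mpr (hdomle t h))
        linarith
      · simp [h]
    · simp only [if_pos ht₀op]
      rw [hepay t₀]
      have h2 : 0 < m b * (epay p i m₁ t₀ - p i (update t₀ i b)) :=
        mul_pos hbpos (sub_pos.mpr ht₀lt)
      linarith
  exact absurd (hmax hm'S) (not_le.mpr hlt)

/-- Main lemma: every pure strategy is weakly matched on `MLW^[k] ⊤` by a mixed strategy
supported in `MLW^[k] ⊤ i`. -/
private lemma mainB (p : ι → (∀ j, σ j) → ℝ) [Fintype ι] (k : ℕ) (i : ι) (a : σ i) :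
    ∃ m ∈ Mixed ((MLW p)^[k] (⊤ : ∀ i, Set (σ i)) i),
      ∀ t, OppIn ((MLW p)^[k] (⊤ : ∀ i, Set (σ i))) i t →
        p i (update t i a) ≤ epay p i m t := by
  classical
  induction k with
  | zero =>
    refine ⟨fun b => if b = a then 1 else 0,
      ⟨fun b => by by_cases h : b = a <;> simp [h], by simp, fun b _ => trivial⟩, fun t _ => ?_⟩
    have : epay p i (fun b => if b = a then (1:ℝ) else 0) t = p i (update t i a) := by
      simp [epay, ite_mul]
    rw [this]
  | succ k ih =>
    obtain ⟨m, ⟨hm0, hm1, hmsupp⟩, hmb⟩ := ih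
    rw [iterate_succ_apply']
    obtain ⟨m', hm', hble⟩ := combine p ((MLW p)^[k] (⊤ : ∀ i, Set (σ i))) i
      (MLW p ((MLW p)^[k] (⊤ : ∀ i, Set (σ i))) i) m hm0 hm1
      (fun b hb => stepA p ((MLW p)^[k] (⊤ : ∀ i, Set (σ i))) i b (hmsupp b hb))
    refine ⟨m', hm', fun t ht => ?_⟩
    have htk : OppIn ((MLW p)^[k] (⊤ : ∀ i, Set (σ i))) i t := fun j hj => (ht j hj).1
    exact le_trans (hmb t htk) (hble t htk)

end AuxLemmas

/-- MGW^ω = MLW^ω. -/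
theorem MGW_omega_eq_MLW_omega {ι : Type*} [DecidableEq ι] [Fintype ι] {σ : ι → Type*}
    [∀ i, Fintype (σ i)] [∀ i, Nonempty (σ i)]
    (hn : 1 < Fintype.card ι) (p : ι → (∀ j, σ j) → ℝ) :
    (⨅ k : ℕ, (MGW p)^[k] ⊤) = ⨅ k : ℕ, (MLW p)^[k] ⊤ := by
  have key : ∀ k : ℕ, (MGW p)^[k] (⊤ : ∀ i, Set (σ i)) = (MLW p)^[k] ⊤ := by
    intro k
    induction k with
    | zero => rfl
    | succ k ih =>
      rw [iterate_succ_apply', iterate_succ_apply', ih]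
      funext i
      ext s
      simp only [MGW, MLW, Set.mem_setOf_eq]
      constructor
      · rintro ⟨hs, hno⟩
        refine ⟨hs, ?_⟩
        rintro ⟨m, hmmem, hdom⟩
        exact hno ⟨m, ⟨hmmem.1, hmmem.2.1, fun b _ => Set.mem_univ b⟩, hdom⟩
      · rintro ⟨hs, hno⟩
        refine ⟨hs, ?_⟩
        rintro ⟨m, ⟨hm0, hm1, -⟩, hdomle, t₀, ht₀, hlt⟩
        obtain ⟨m', hm'mem, hble⟩ := combine p ((MLW p)^[k] (⊤ : ∀ i, Set (σ i))) i
          ((MLW p)^[k] (⊤ : ∀ i, Set (σ i)) i) m hm0 hm1 (fun b _ => mainB p k i b)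
        exact hno ⟨m', hm'mem, fun t ht => le_trans (hdomle t ht) (hble t ht),
          t₀, ht₀, lt_of_lt_of_le hlt (hble t₀ ht₀)⟩
  exact iInf_congr key
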